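/- Let m ≥ 2 be an integer, C a real number, and t a nonzero real number. Define β : ℝ^{m+1} → ℝ by β(x₁,…,x_m,z) = (Σᵢ₌₁^m xᵢ + z + C)^t on the region U = {(x₁,…,x_m,z) : Σᵢ₌₁^m xᵢ + z + C > 0}. Then the expression Σᵢ₌₁^m (β·∂ᵢ∂ᵢβ − m·(∂ᵢβ)²) + m·(β·∂_z∂_zβ − 2·(∂_zβ)²) + ((m−2)/(2·∂_zβ))·Σᵢ₌₁^m (β²·∂ᵢ∂ᵢ∂_zβ − (m−2)·β·∂ᵢβ·∂ᵢ∂_zβ) + ((m−2)(m−4)/(4·(∂_zβ)²))·Σᵢ₌₁^m β²·(∂ᵢ∂_zβ)² vanishes at every point of U if and only if (m²+4)·t² + (2m+4)·t + 2m − m² = 0. -/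

import Mathlib

/-- The partial derivative of `f : ℝⁿ → ℝ` in the `i`-th coordinate direction. -/
noncomputable def pd {n : ℕ} (i : Fin n) (f : (Fin n → ℝ) → ℝ) : (Fin n → ℝ) → ℝ :=
  fun x => deriv (fun s : ℝ => f (Function.update x i s)) (x i)

noncomputable def Sfun (n : ℕ) (C : ℝ) (x : Fin n → ℝ) : ℝ := (∑ i, x i) + C

lemma Sfun_update (n : ℕ) (C : ℝ) (x : Fin n → ℝ) (j : Fin n) (s : ℝ) :
    Sfun n C (Function.update x j s) = s + (Sfun n C x - x j) := by
  simp [Sfun, Finset.sum_update_of_mem, Finset.sum_erase_eq_sub (Finset.mem_univ j)]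
  ring

lemma pd_cS (n : ℕ) (C c r : ℝ) (j : Fin n) (x : Fin n → ℝ) (hx : 0 < Sfun n C x) :
    pd j (fun y => c * Sfun n C y ^ r) x = (c * r) * Sfun n C x ^ (r - 1) := by
  unfold pd
  have key : (fun s : ℝ => c * Sfun n C (Function.update x j s) ^ r)
      = fun s : ℝ => c * (s + (Sfun n C x - x j)) ^ r := by
    funext s; rw [Sfun_update]
  rw [key]
  have hxa : x j + (Sfun n C x - x j) = Sfun n C x := by ring
  have hd : HasDerivAt (fun s : ℝ => c * (s + (Sfun n C x - x j)) ^ r)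
      (c * (r * (x j + (Sfun n C x - x j)) ^ (r - 1) * 1)) (x j) := by
    refine HasDerivAt.const_mul c ?_
    have h1 : HasDerivAt (fun s : ℝ => s + (Sfun n C x - x j)) 1 (x j) :=
      (hasDerivAt_id _).add_const _
    have h2 : HasDerivAt (fun u : ℝ => u ^ r)
        (r * (x j + (Sfun n C x - x j)) ^ (r - 1)) (x j + (Sfun n C x - x j)) :=
      Real.hasDerivAt_rpow_const (Or.inl (by rw [hxa]; exact hx.ne'))
    exact HasDerivAt.comp (x j) h2 h1
  rw [hd.deriv, hxa]; ring

lemma pd_congr (n : ℕ) (C : ℝ) (f g : (Fin n → ℝ) → ℝ) (j : Fin n) (x : Fin n → ℝ)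
    (hx : 0 < Sfun n C x) (h : ∀ y, 0 < Sfun n C y → f y = g y) :
    pd j f x = pd j g x := by
  unfold pd
  apply Filter.EventuallyEq.deriv_eq
  have hev : ∀ᶠ s in nhds (x j), 0 < Sfun n C (Function.update x j s) := by
    have h1 : Set.Ioi (x j - Sfun n C x) ∈ nhds (x j) := Ioi_mem_nhds (by linarith)
    filter_upwards [h1] with s hs
    rw [Sfun_update]
    have := Set.mem_Ioi.mp hs
    linarith
  filter_upwards [hev] with s hs using h _ hs


/-- Let `m ≥ 2` be an integer, `C` real, `t ≠ 0` real, and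
`β(x₁,…,x_m,z) = (Σᵢ xᵢ + z + C)^t` on the region `{Σᵢ xᵢ + z + C > 0}`. Then
the left-hand side of the PDE (pc1) vanishes at every point of the region iff
`(m²+4)t² + (2m+4)t + 2m − m² = 0`. -/
theorem stmt5 (m : ℕ) (hm : 2 ≤ m) (C t : ℝ) (ht : t ≠ 0)
    (β : (Fin (m + 1) → ℝ) → ℝ)
    (hβ : ∀ x : Fin (m + 1) → ℝ,
      0 < (∑ i : Fin m, x i.castSucc) + x (Fin.last m) + C →
      β x = ((∑ i : Fin m, x i.castSucc) + x (Fin.last m) + C) ^ t) :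
    (∀ x : Fin (m + 1) → ℝ,
        0 < (∑ i : Fin m, x i.castSucc) + x (Fin.last m) + C →
        (∑ i : Fin m,
            (β x * pd i.castSucc (pd i.castSucc β) x - (m : ℝ) * (pd i.castSucc β x) ^ 2))
          + (m : ℝ) *
              (β x * pd (Fin.last m) (pd (Fin.last m) β) x - 2 * (pd (Fin.last m) β x) ^ 2)
          + (((m : ℝ) - 2) / (2 * pd (Fin.last m) β x)) *
              (∑ i : Fin m,
                ((β x) ^ 2 * pd i.castSucc (pd i.castSucc (pd (Fin.last m) β)) x
                  - ((m : ℝ) - 2) * β x * pd i.castSucc β x *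
                      pd i.castSucc (pd (Fin.last m) β) x))
          + (((m : ℝ) - 2) * ((m : ℝ) - 4) / (4 * (pd (Fin.last m) β x) ^ 2)) *
              (∑ i : Fin m, (β x) ^ 2 * (pd i.castSucc (pd (Fin.last m) β) x) ^ 2)
        = 0)
      ↔ ((m : ℝ) ^ 2 + 4) * t ^ 2 + (2 * (m : ℝ) + 4) * t + 2 * (m : ℝ) - (m : ℝ) ^ 2 = 0 := by
  set q : ℝ := ((m : ℝ) ^ 2 + 4) * t ^ 2 + (2 * (m : ℝ) + 4) * t + 2 * (m : ℝ) - (m : ℝ) ^ 2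
    with hq_def
  have hS : ∀ x : Fin (m + 1) → ℝ,
      Sfun (m + 1) C x = (∑ i : Fin m, x i.castSucc) + x (Fin.last m) + C := by
    intro x; simp [Sfun, Fin.sum_univ_castSucc]
  have hβ' : ∀ y, 0 < Sfun (m + 1) C y → β y = 1 * Sfun (m + 1) C y ^ t := by
    intro y hy
    rw [hS] at hy
    rw [hβ y hy, one_mul, hS]
  have h1 : ∀ (j : Fin (m + 1)) (x : Fin (m + 1) → ℝ), 0 < Sfun (m + 1) C x →
      pd j β x = (1 * t) * Sfun (m + 1) C x ^ (t - 1) := by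
    intro j x hx
    rw [pd_congr (m + 1) C β (fun y => 1 * Sfun (m + 1) C y ^ t) j x hx hβ']
    exact pd_cS (m + 1) C 1 t j x hx
  have h2 : ∀ (j k : Fin (m + 1)) (x : Fin (m + 1) → ℝ), 0 < Sfun (m + 1) C x →
      pd j (pd k β) x = (1 * t * (t - 1)) * Sfun (m + 1) C x ^ (t - 1 - 1) := by
    intro j k x hx
    rw [pd_congr (m + 1) C (pd k β) (fun y => (1 * t) * Sfun (m + 1) C y ^ (t - 1)) j x hx
      (fun y hy => h1 k y hy)]
    exact pd_cS (m + 1) C (1 * t) (t - 1) j x hx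
  have h3 : ∀ (j k l : Fin (m + 1)) (x : Fin (m + 1) → ℝ), 0 < Sfun (m + 1) C x →
      pd j (pd k (pd l β)) x
        = (1 * t * (t - 1) * (t - 1 - 1)) * Sfun (m + 1) C x ^ (t - 1 - 1 - 1) := by
    intro j k l x hx
    rw [pd_congr (m + 1) C (pd k (pd l β)) (fun y => (1 * t * (t - 1)) * Sfun (m + 1) C y ^ (t - 1 - 1))
      j x hx (fun y hy => h2 k l y hy)]
    exact pd_cS (m + 1) C (1 * t * (t - 1)) (t - 1 - 1) j x hx
  have key : ∀ x : Fin (m + 1) → ℝ,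
      0 < (∑ i : Fin m, x i.castSucc) + x (Fin.last m) + C →
      (∑ i : Fin m,
            (β x * pd i.castSucc (pd i.castSucc β) x - (m : ℝ) * (pd i.castSucc β x) ^ 2))
          + (m : ℝ) *
              (β x * pd (Fin.last m) (pd (Fin.last m) β) x - 2 * (pd (Fin.last m) β x) ^ 2)
          + (((m : ℝ) - 2) / (2 * pd (Fin.last m) β x)) *
              (∑ i : Fin m,
                ((β x) ^ 2 * pd i.castSucc (pd i.castSucc (pd (Fin.last m) β)) x
                  - ((m : ℝ) - 2) * β x * pd i.castSucc β x *
                      pd i.castSucc (pd (Fin.last m) β) x))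
          + (((m : ℝ) - 2) * ((m : ℝ) - 4) / (4 * (pd (Fin.last m) β x) ^ 2)) *
              (∑ i : Fin m, (β x) ^ 2 * (pd i.castSucc (pd (Fin.last m) β) x) ^ 2)
        = -((m : ℝ) * (Sfun (m + 1) C x ^ t) ^ 2 * q) / (4 * Sfun (m + 1) C x ^ 2) := by
    intro x hx0
    have hx : 0 < Sfun (m + 1) C x := by rw [hS]; exact hx0
    have e0 : β x = 1 * Sfun (m + 1) C x ^ t := hβ' x hx
    simp only [e0, h3, h2, h1, hx]
    simp only [Finset.sum_const, Finset.card_univ, Fintype.card_fin, nsmul_eq_mul]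
    set A := Sfun (m + 1) C x with hA_def
    have hAne : A ≠ 0 := hx.ne'
    have hPne : A ^ t ≠ 0 := (Real.rpow_pos_of_pos hx t).ne'
    have e1 : A ^ (t - 1) = A ^ t / A := by
      rw [Real.rpow_sub hx, Real.rpow_one]
    have e2 : A ^ (t - 1 - 1) = A ^ t / A / A := by
      rw [Real.rpow_sub hx, Real.rpow_one, e1]
    have e3 : A ^ (t - 1 - 1 - 1) = A ^ t / A / A / A := by
      rw [Real.rpow_sub hx, Real.rpow_one, e2]
    rw [e3, e2, e1]
    field_simp
    ring
  constructor
  · intro h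
    set x₀ : Fin (m + 1) → ℝ := fun _ => (1 - C) / (m + 1) with hx₀_def
    have hm1 : ((m : ℝ) + 1) ≠ 0 := by positivity
    have hSx₀ : Sfun (m + 1) C x₀ = 1 := by
      simp [Sfun, hx₀_def, Finset.sum_const, Finset.card_univ]
      field_simp
      ring
    have hx₀ : 0 < (∑ i : Fin m, x₀ i.castSucc) + x₀ (Fin.last m) + C := by
      rw [← hS, hSx₀]; norm_num
    have hzero := h x₀ hx₀
    rw [key x₀ hx₀, hSx₀, Real.one_rpow] at hzero
    have hmne : (m : ℝ) ≠ 0 := by positivity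
    have : (m : ℝ) * q = 0 := by
      field_simp at hzero
      linarith
    rcases mul_eq_zero.mp this with h' | h'
    · exact absurd h' hmne
    · exact h'
  · intro hq x hx
    rw [key x hx, hq]
    simp
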